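/- arXiv:1201.1728 — 7 statements merged into one kernel-verified Lean document; each statement's English description precedes it below -/
import Mathlib

section
/- For every integer n ≥ 2 and every i ∈ {0,1,…,n}, the set S_i = {σ ∈ Alt_{n+1} : σ(0) = i or σ(1) = i} is a worst-case efficient dominating set of the star digraph ST⃗_{n+1}, and its cardinality is |S_i| = n!. -/
/-- The 3-cycle `gᵢ` determined by `gᵢ 0 = i`, `gᵢ i = 1`, `gᵢ 1 = 0`. -/
def gcyc {m : ℕ} [NeZero m] (i : Fin m) : Equiv.Perm (Fin m) :=
  Equiv.swap 1 i * Equiv.swap 0 1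

/-- Vertices of the star digraph `ST⃗_m`: the even permutations of `{0, …, m-1}`. -/
abbrev StarVertex (m : ℕ) := {σ : Equiv.Perm (Fin m) // σ ∈ alternatingGroup (Fin m)}

/-- The arc relation of the star digraph `ST⃗_m`: there is an arc from `σ` to `σ ∘ gᵢ`
for each `i ∈ {2, …, m-1}`. -/
def starArc {m : ℕ} [NeZero m] (σ τ : StarVertex m) : Prop :=
  ∃ i : Fin m, 2 ≤ i.val ∧ (τ : Equiv.Perm (Fin m)) = (σ : Equiv.Perm (Fin m)) * gcyc i

/-- A set `S` of vertices is ±stable for the arc relation `A` if every vertex of the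
subdigraph induced by `S` has in-degree `0` or out-degree `0` there. -/
def IsPMStable {V : Type*} (A : V → V → Prop) (S : Set V) : Prop :=
  ∀ v ∈ S, (∀ u ∈ S, ¬ A u v) ∨ (∀ u ∈ S, ¬ A v u)

/-- A set `S` of vertices is perfect ±dominating for the arc relation `A` if every vertex
outside `S` has exactly one in-neighbor in `S` and exactly one out-neighbor in `S`. -/
def IsPerfectPMDominating {V : Type*} (A : V → V → Prop) (S : Set V) : Prop :=
  ∀ v, v ∉ S → (∃! u, u ∈ S ∧ A u v) ∧ (∃! w, w ∈ S ∧ A v w)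

/-- A worst-case efficient dominating set: perfect ±dominating and ±stable. -/
def IsWCEDS {V : Type*} (A : V → V → Prop) (S : Set V) : Prop :=
  IsPerfectPMDominating A S ∧ IsPMStable A S

/-- The set `S_i = {σ ∈ Alt_m : σ 0 = i or σ 1 = i}`. -/
def Sset (m : ℕ) [NeZero m] (i : Fin m) : Set (StarVertex m) :=
  {σ | (σ : Equiv.Perm (Fin m)) 0 = i ∨ (σ : Equiv.Perm (Fin m)) 1 = i}

section Aux
variable {m : ℕ} [NeZero m]

lemma gcyc_apply_zero (i : Fin m) : gcyc i 0 = i := by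
  simp [gcyc, Equiv.Perm.mul_apply]

lemma gcyc_apply_one {i : Fin m} (h01 : (0 : Fin m) ≠ 1) (h0 : i ≠ 0) : gcyc i 1 = 0 := by
  simp only [gcyc, Equiv.Perm.mul_apply, Equiv.swap_apply_right]
  exact Equiv.swap_apply_of_ne_of_ne h01 (fun h => h0 h.symm)

lemma gcyc_apply_self {i : Fin m} (h0 : i ≠ 0) (h1 : i ≠ 1) : gcyc i i = 1 := by
  simp only [gcyc, Equiv.Perm.mul_apply]
  rw [Equiv.swap_apply_of_ne_of_ne h0 h1, Equiv.swap_apply_right]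

lemma gcyc_mem {i : Fin m} (h01 : (0 : Fin m) ≠ 1) (h1 : i ≠ 1) :
    gcyc i ∈ alternatingGroup (Fin m) := by
  rw [Equiv.Perm.mem_alternatingGroup, gcyc, map_mul,
    Equiv.Perm.sign_swap (Ne.symm h1), Equiv.Perm.sign_swap h01]
  norm_num

lemma gcyc_inv_zero {i : Fin m} (h01 : (0 : Fin m) ≠ 1) (h0 : i ≠ 0) :
    (gcyc i)⁻¹ 0 = 1 := by
  conv_lhs => rw [← gcyc_apply_one h01 h0]
  exact Equiv.symm_apply_apply _ _

lemma gcyc_inv_one {i : Fin m} (h0 : i ≠ 0) (h1 : i ≠ 1) :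
    (gcyc i)⁻¹ 1 = i := by
  conv_lhs => rw [← gcyc_apply_self h0 h1]
  exact Equiv.symm_apply_apply _ _

end Aux

noncomputable def phiEquiv (m : ℕ) [NeZero m] (i : Fin m) (h01 : (0 : Fin m) ≠ 1) :
    ↥(Sset m i) ≃ {π : Equiv.Perm (Fin m) // π 0 = i} := by
  classical
  refine
    { toFun := fun σ =>
        if h : (σ.val : Equiv.Perm (Fin m)) 0 = i then ⟨(σ.val : Equiv.Perm (Fin m)), h⟩
        else ⟨(σ.val : Equiv.Perm (Fin m)) * Equiv.swap 0 1, by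
          have hS := σ.2
          simp only [Sset, Set.mem_setOf_eq] at hS
          have h1 : (σ.val : Equiv.Perm (Fin m)) 1 = i := hS.resolve_left h
          simpa using h1⟩
      invFun := fun π =>
        if h : π.val ∈ alternatingGroup (Fin m) then ⟨⟨π.val, h⟩, Or.inl π.2⟩
        else ⟨⟨π.val * Equiv.swap 0 1, by
            rw [Equiv.Perm.mem_alternatingGroup] at h ⊢
            rw [map_mul, Equiv.Perm.sign_swap h01]
            rcases Int.units_eq_one_or (Equiv.Perm.sign π.val) with hs | hs
            · exact absurd hs h
            · rw [hs]; norm_num⟩,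
          Or.inr (by simpa using π.2)⟩
      left_inv := ?_
      right_inv := ?_ }
  · intro σ
    by_cases h : (σ.val : Equiv.Perm (Fin m)) 0 = i
    · simp only [dif_pos h]
      rw [dif_pos σ.val.2]
    · simp only [dif_neg h]
      have hne : (σ.val : Equiv.Perm (Fin m)) * Equiv.swap 0 1 ∉ alternatingGroup (Fin m) := by
        rw [Equiv.Perm.mem_alternatingGroup, map_mul, Equiv.Perm.sign_swap h01,
          (Equiv.Perm.mem_alternatingGroup).mp σ.val.2]
        norm_num
      rw [dif_neg hne]
      apply Subtype.ext; apply Subtype.ext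
      simp [mul_assoc]
  · intro π
    by_cases h : π.val ∈ alternatingGroup (Fin m)
    · simp only [dif_pos h]
      rw [dif_pos π.2]
    · simp only [dif_neg h]
      have hne : (π.val * Equiv.swap 0 1 : Equiv.Perm (Fin m)) 0 ≠ i := by
        simp only [Equiv.Perm.mul_apply, Equiv.swap_apply_left]
        intro hc
        exact h01 (π.val.injective (hc.trans π.2.symm)).symm
      rw [dif_neg hne]
      apply Subtype.ext
      simp [mul_assoc]

noncomputable def psiEquiv (n : ℕ) (i : Fin (n + 1)) :
    {π : Equiv.Perm (Fin (n + 1)) // π 0 = i} ≃ Equiv.Perm (Fin n) where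
  toFun π := (Equiv.Perm.decomposeFin π.val).2
  invFun e := ⟨Equiv.Perm.decomposeFin.symm (i, e),
    Equiv.Perm.decomposeFin_symm_apply_zero i e⟩
  left_inv := by
    intro π
    have h1 : (Equiv.Perm.decomposeFin π.val).1 = i := by
      have h := Equiv.Perm.decomposeFin_symm_apply_zero (Equiv.Perm.decomposeFin π.val).1
        (Equiv.Perm.decomposeFin π.val).2
      rw [Prod.mk.eta, Equiv.symm_apply_apply] at h
      exact h.symm.trans π.2
    have h2 : (i, (Equiv.Perm.decomposeFin π.val).2) = Equiv.Perm.decomposeFin π.val :=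
      Prod.ext h1.symm rfl
    apply Subtype.ext
    show Equiv.Perm.decomposeFin.symm (i, (Equiv.Perm.decomposeFin π.val).2) = π.val
    rw [h2, Equiv.symm_apply_apply]
  right_inv := by
    intro e
    simp

/-- For every integer `n ≥ 2` and every `i ∈ {0, …, n}`, the set
`S_i = {σ ∈ Alt_{n+1} : σ 0 = i or σ 1 = i}` is a worst-case efficient dominating set of
the star digraph `ST⃗_{n+1}`, of cardinality `n!`. -/
theorem stmt1 (n : ℕ) (hn : 2 ≤ n) (i : Fin (n + 1)) :
    IsWCEDS starArc (Sset (n + 1) i) ∧ (Sset (n + 1) i).ncard = Nat.factorial n := by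
  have hv1 : (1 : Fin (n + 1)).val = 1 := by
    rw [Fin.val_one']; exact Nat.mod_eq_of_lt (by omega)
  have h01 : (0 : Fin (n + 1)) ≠ 1 := by
    intro h
    have := congrArg Fin.val h
    rw [Fin.val_zero, hv1] at this
    omega
  have keyne : ∀ k : Fin (n + 1), 2 ≤ k.val → k ≠ 0 ∧ k ≠ 1 := by
    intro k hk
    constructor
    · intro h; rw [h, Fin.val_zero] at hk; omega
    · intro h; rw [h, hv1] at hk; omega
  refine ⟨⟨?_, ?_⟩, ?_⟩
  · -- perfect ±dominating
    intro v hv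
    simp only [Sset, Set.mem_setOf_eq] at hv
    push_neg at hv
    obtain ⟨hv0, hv1'⟩ := hv
    set k : Fin (n + 1) := (v.val : Equiv.Perm (Fin (n + 1)))⁻¹ i with hkdef
    have hvk : (v.val : Equiv.Perm (Fin (n + 1))) k = i :=
      Equiv.apply_symm_apply _ _
    have hk0 : k ≠ 0 := fun h => hv0 (h ▸ hvk)
    have hk1 : k ≠ 1 := fun h => hv1' (h ▸ hvk)
    have hk2 : 2 ≤ k.val := by
      have h0' : k.val ≠ 0 := fun h => hk0 (Fin.val_injective (by rw [h, Fin.val_zero]))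
      have h1' : k.val ≠ 1 := fun h => hk1 (Fin.val_injective (by rw [h, hv1]))
      omega
    constructor
    · -- unique in-neighbor
      refine ⟨⟨(v.val : Equiv.Perm (Fin (n + 1))) * (gcyc k)⁻¹,
        mul_mem v.2 (inv_mem (gcyc_mem h01 hk1))⟩, ⟨?_, ?_⟩, ?_⟩
      · exact Or.inr (by
          simp only [Equiv.Perm.mul_apply]
          rw [gcyc_inv_one hk0 hk1]; exact hvk)
      · exact ⟨k, hk2, by simp [inv_mul_cancel_right]⟩
      · rintro u' ⟨hu', j, hj2, hj⟩
        obtain ⟨hj0, hj1⟩ := keyne j hj2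
        have hu'v : (u'.val : Equiv.Perm (Fin (n + 1))) =
            (v.val : Equiv.Perm (Fin (n + 1))) * (gcyc j)⁻¹ := by
          rw [hj]; simp [mul_assoc]
        have hu'0 : (u'.val : Equiv.Perm (Fin (n + 1))) 0 ≠ i := by
          rw [hu'v]
          simp only [Equiv.Perm.mul_apply]
          rw [gcyc_inv_zero h01 hj0]
          exact hv1'
        simp only [Sset, Set.mem_setOf_eq] at hu'
        have h1' : (u'.val : Equiv.Perm (Fin (n + 1))) 1 = i := hu'.resolve_left hu'0
        rw [hu'v] at h1'
        simp only [Equiv.Perm.mul_apply] at h1'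
        rw [gcyc_inv_one hj0 hj1] at h1'
        have : j = k := (v.val : Equiv.Perm (Fin (n + 1))).injective (h1'.trans hvk.symm)
        apply Subtype.ext
        rw [hu'v, this]
    · -- unique out-neighbor
      refine ⟨⟨(v.val : Equiv.Perm (Fin (n + 1))) * gcyc k,
        mul_mem v.2 (gcyc_mem h01 hk1)⟩, ⟨?_, ?_⟩, ?_⟩
      · exact Or.inl (by
          simp only [Equiv.Perm.mul_apply]
          rw [gcyc_apply_zero]; exact hvk)
      · exact ⟨k, hk2, rfl⟩
      · rintro w' ⟨hw', j, hj2, hj⟩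
        obtain ⟨hj0, hj1⟩ := keyne j hj2
        have hw'1 : (w'.val : Equiv.Perm (Fin (n + 1))) 1 ≠ i := by
          rw [hj]
          simp only [Equiv.Perm.mul_apply]
          rw [gcyc_apply_one h01 hj0]
          exact hv0
        simp only [Sset, Set.mem_setOf_eq] at hw'
        have h0' : (w'.val : Equiv.Perm (Fin (n + 1))) 0 = i := hw'.resolve_right hw'1
        rw [hj] at h0'
        simp only [Equiv.Perm.mul_apply] at h0'
        rw [gcyc_apply_zero] at h0'
        have : j = k := (v.val : Equiv.Perm (Fin (n + 1))).injective (h0'.trans hvk.symm)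
        apply Subtype.ext
        rw [hj, this]
  · -- ±stable
    intro v hv
    by_cases h : (v.val : Equiv.Perm (Fin (n + 1))) 0 = i
    · left
      rintro u hu ⟨j, hj2, hj⟩
      obtain ⟨hj0, hj1⟩ := keyne j hj2
      have hvj : (u.val : Equiv.Perm (Fin (n + 1))) j = i := by
        rw [hj] at h
        simp only [Equiv.Perm.mul_apply] at h
        rw [gcyc_apply_zero] at h
        exact h
      simp only [Sset, Set.mem_setOf_eq] at hu
      rcases hu with h0 | h1
      · exact hj0 ((u.val : Equiv.Perm (Fin (n + 1))).injective (hvj.trans h0.symm))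
      · exact hj1 ((u.val : Equiv.Perm (Fin (n + 1))).injective (hvj.trans h1.symm))
    · right
      simp only [Sset, Set.mem_setOf_eq] at hv
      have h1 : (v.val : Equiv.Perm (Fin (n + 1))) 1 = i := hv.resolve_left h
      rintro w hw ⟨j, hj2, hj⟩
      obtain ⟨hj0, hj1⟩ := keyne j hj2
      simp only [Sset, Set.mem_setOf_eq] at hw
      rcases hw with h0' | h1'
      · rw [hj] at h0'
        simp only [Equiv.Perm.mul_apply] at h0'
        rw [gcyc_apply_zero] at h0'
        exact hj1 ((v.val : Equiv.Perm (Fin (n + 1))).injective (h0'.trans h1.symm))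
      · rw [hj] at h1'
        simp only [Equiv.Perm.mul_apply] at h1'
        rw [gcyc_apply_one h01 hj0] at h1'
        exact h h1'
  · -- cardinality
    rw [← Nat.card_coe_set_eq,
      Nat.card_congr ((phiEquiv (n + 1) i h01).trans (psiEquiv n i))]
    simp [Nat.card_eq_fintype_card, Fintype.card_perm, Fintype.card_fin]
end

section
/- For every integer n ≥ 2 and every i ∈ {0,1,…,n}, every arc of the star digraph ST⃗_{n+1} having both endpoints in S_i = {σ ∈ Alt_{n+1} : σ(0) = i or σ(1) = i} goes from a vertex σ with σ(0) = i to a vertex τ with τ(1) = i; in particular, in the subdigraph induced on S_i every vertex σ with σ(0) = i is a source, every vertex τ with τ(1) = i is a sink, and the two sets {σ : σ(0) = i} and {τ : τ(1) = i} are each stable (no arcs between two of their own vertices). Moreover, the underlying undirected graph of the subdigraph induced on S_i is isomorphic to the star graph ST_n. -/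
/-- The adjacency relation of the (undirected) star graph `ST_m`: `σ` is adjacent to
`σ ∘ (0 i)` for each `i ∈ {1, …, m-1}`. -/
def starAdj {m : ℕ} [NeZero m] (σ τ : Equiv.Perm (Fin m)) : Prop :=
  ∃ i : Fin m, 1 ≤ i.val ∧ τ = σ * Equiv.swap 0 i

section StarAux

open Equiv Equiv.Perm

variable {n : ℕ}

/-! ### Decoding permutations of `Fin (n+2)` to permutations of `Fin (n+3)` -/

/-- decode: the representative with value `i` at position 0. -/
def Dmap (i : Fin (n + 3)) (g : Perm (Fin (n + 2))) : Perm (Fin (n + 3)) :=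
  Equiv.Perm.decomposeFin.symm (i, g)

lemma Dmap_zero (i : Fin (n + 3)) (g : Perm (Fin (n + 2))) : Dmap i g 0 = i :=
  Equiv.Perm.decomposeFin_symm_apply_zero i g

lemma Dmap_inj (i : Fin (n + 3)) : Function.Injective (Dmap i) := by
  intro a b h
  have := Equiv.Perm.decomposeFin.symm.injective h
  exact (Prod.ext_iff.1 this).2

lemma Dmap_surj (i : Fin (n + 3)) (σ : Perm (Fin (n + 3))) (h : σ 0 = i) :
    ∃ g, Dmap i g = σ := by
  refine ⟨(Equiv.Perm.decomposeFin σ).2, ?_⟩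
  have h1 : Equiv.Perm.decomposeFin.symm (Equiv.Perm.decomposeFin σ) = σ :=
    Equiv.symm_apply_apply _ _
  have h2 : σ 0 = (Equiv.Perm.decomposeFin σ).1 := by
    conv_lhs => rw [← h1, ← Prod.mk.eta (p := Equiv.Perm.decomposeFin σ)]
    rw [Equiv.Perm.decomposeFin_symm_apply_zero]
  unfold Dmap
  rw [← h, h2, Prod.mk.eta, h1]

lemma decompose_mul (p : Fin (n + 3)) (g h : Perm (Fin (n + 2))) :
    Equiv.Perm.decomposeFin.symm (p, g) * Equiv.Perm.decomposeFin.symm (0, h)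
      = Equiv.Perm.decomposeFin.symm (p, g * h) := by
  ext x
  refine Fin.cases ?_ ?_ x
  · simp [Equiv.Perm.mul_apply, Equiv.Perm.decomposeFin_symm_apply_zero]
  · intro k
    simp [Equiv.Perm.mul_apply, Equiv.Perm.decomposeFin_symm_apply_succ, Equiv.swap_self]

lemma lift_swap (j : Fin (n + 2)) :
    Equiv.Perm.decomposeFin.symm ((0 : Fin (n+3)), Equiv.swap 0 j)
      = Equiv.swap 1 j.succ := by
  ext x
  refine Fin.cases ?_ ?_ x
  · rw [Equiv.Perm.decomposeFin_symm_apply_zero,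
      Equiv.swap_apply_of_ne_of_ne (Fin.ne_of_val_ne (by simp)) (Ne.symm (Fin.succ_ne_zero j))]
  · intro k
    rw [Equiv.Perm.decomposeFin_symm_apply_succ, Equiv.swap_self, Equiv.refl_apply,
      ← Fin.succ_zero_eq_one, Function.Injective.swap_apply (Fin.succ_injective _)]

lemma Dmap_mul_swap (i : Fin (n + 3)) (g : Perm (Fin (n + 2))) (j : Fin (n + 2)) :
    Dmap i (g * Equiv.swap 0 j) = Dmap i g * Equiv.swap 1 j.succ := by
  rw [Dmap, ← decompose_mul, lift_swap, Dmap]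

/-! ### Computations with `gcyc` -/

variable (j : Fin (n + 3))

lemma jne0 (hj : 2 ≤ j.val) : j ≠ 0 :=
  Fin.ne_of_val_ne (by simp only [Fin.val_zero]; omega)
lemma jne1 (hj : 2 ≤ j.val) : j ≠ 1 :=
  Fin.ne_of_val_ne (by simp only [Fin.val_one]; omega)

lemma gcyc_zero : gcyc j 0 = j := by
  rw [gcyc, Equiv.Perm.mul_apply, Equiv.swap_apply_left, Equiv.swap_apply_left]

lemma gcyc_one (hj : 2 ≤ j.val) : gcyc j 1 = 0 := by
  rw [gcyc, Equiv.Perm.mul_apply, Equiv.swap_apply_right,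
    Equiv.swap_apply_of_ne_of_ne (Fin.ne_of_val_ne (by simp)) (Ne.symm (jne0 j hj))]

lemma gcyc_eq : gcyc j = Equiv.swap 1 j * Equiv.swap 0 1 := rfl

/-! ### Raw arc lemmas -/

variable {i : Fin (n + 3)} {σ τ : Perm (Fin (n + 3))}

/-- no arc between two type-A vertices -/
lemma no_arc_AA (hσ : σ 0 = i) (hτ : τ 0 = i)
    (hj : 2 ≤ j.val) : τ ≠ σ * gcyc j := by
  intro h
  have h1 : τ 1 = σ 0 := by rw [h, Equiv.Perm.mul_apply, gcyc_one j hj]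
  have : (1 : Fin (n + 3)) = 0 := τ.injective (by rw [h1, hσ, hτ])
  exact absurd this (Fin.ne_of_val_ne (by simp))

/-- no arc from a type-B vertex to a type-A vertex -/
lemma no_arc_BA (hσ : σ 0 = i) (hτ : τ 0 = i)
    (hj : 2 ≤ j.val) : τ ≠ σ * Equiv.swap 0 1 * gcyc j := by
  intro h
  have h1 : τ 0 = σ j := by
    rw [h, Equiv.Perm.mul_apply, Equiv.Perm.mul_apply, gcyc_zero,
      Equiv.swap_apply_of_ne_of_ne (jne0 j hj) (jne1 j hj)]
  have : j = 0 := σ.injective (by rw [← h1, hσ, hτ])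
  exact absurd this (jne0 j hj)

/-- no arc between two type-B vertices -/
lemma no_arc_BB (hσ : σ 0 = i) (hτ : τ 0 = i)
    (hj : 2 ≤ j.val) :
    τ * Equiv.swap 0 1 ≠ σ * Equiv.swap 0 1 * gcyc j := by
  intro h
  have h1 : τ 0 = σ 1 := by
    have := congrArg (fun p => p 1) h
    simpa [Equiv.Perm.mul_apply, gcyc_one j hj, Equiv.swap_apply_right,
      Equiv.swap_apply_left] using this
  have : (0 : Fin (n + 3)) = 1 := σ.injective (by rw [← h1, hσ, hτ])
  exact absurd this (Fin.ne_of_val_ne (by simp))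

/-- A→B arcs characterization. -/
lemma arc_AB :
    τ * Equiv.swap 0 1 = σ * gcyc j ↔ τ = σ * Equiv.swap 1 j := by
  rw [gcyc_eq, ← mul_assoc]
  constructor
  · intro h
    have := congrArg (fun p => p * Equiv.swap 0 1) h
    simpa [mul_assoc, Equiv.swap_mul_self] using this
  · intro h; rw [h]

lemma starAdj_symm {m : ℕ} [NeZero m] {g h : Perm (Fin m)} :
    starAdj g h ↔ starAdj h g := by
  constructor <;>
  · rintro ⟨j, hj, rfl⟩
    exact ⟨j, hj, by rw [mul_assoc, Equiv.swap_mul_self, mul_one]⟩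

/-! ### The embedding `Fmap` -/

noncomputable def Fmap (i : Fin (n + 3)) (g : Perm (Fin (n + 2))) : ↥(Sset (n + 3) i) :=
  if h : Equiv.Perm.sign (Dmap i g) = 1 then
    ⟨⟨Dmap i g, Equiv.Perm.mem_alternatingGroup.2 h⟩, Or.inl (Dmap_zero i g)⟩
  else
    ⟨⟨Dmap i g * Equiv.swap 0 1, by
        rw [Equiv.Perm.mem_alternatingGroup, Equiv.Perm.sign_mul,
          Equiv.Perm.sign_swap (Fin.ne_of_val_ne (by simp))]
        rcases Int.units_eq_one_or (Equiv.Perm.sign (Dmap i g)) with h1 | h1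
        · exact absurd h1 h
        · rw [h1]; decide⟩,
      Or.inr (by
        show (Dmap i g * Equiv.swap 0 1 : Equiv.Perm (Fin (n + 3))) 1 = i
        rw [Equiv.Perm.mul_apply, Equiv.swap_apply_right, Dmap_zero])⟩

lemma Fmap_pos (i : Fin (n + 3)) (g : Perm (Fin (n + 2)))
    (h : Equiv.Perm.sign (Dmap i g) = 1) :
    ((Fmap i g : StarVertex (n + 3)) : Perm (Fin (n + 3))) = Dmap i g := by
  rw [Fmap, dif_pos h]

lemma Fmap_neg (i : Fin (n + 3)) (g : Perm (Fin (n + 2)))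
    (h : ¬ Equiv.Perm.sign (Dmap i g) = 1) :
    ((Fmap i g : StarVertex (n + 3)) : Perm (Fin (n + 3))) = Dmap i g * Equiv.swap 0 1 := by
  rw [Fmap, dif_neg h]

lemma Fmap_inj (i : Fin (n + 3)) : Function.Injective (Fmap i) := by
  intro a b h
  have h' : ((Fmap i a : StarVertex (n + 3)) : Perm (Fin (n + 3)))
      = ((Fmap i b : StarVertex (n + 3)) : Perm (Fin (n + 3))) := by rw [h]
  by_cases ha : Equiv.Perm.sign (Dmap i a) = 1 <;>
    by_cases hb : Equiv.Perm.sign (Dmap i b) = 1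
  · rw [Fmap_pos i a ha, Fmap_pos i b hb] at h'
    exact Dmap_inj i h'
  · rw [Fmap_pos i a ha, Fmap_neg i b hb] at h'
    exfalso
    have : Dmap i a 0 = (Dmap i b * Equiv.swap 0 1 : Equiv.Perm (Fin (n + 3))) 0 := by rw [h']
    rw [Dmap_zero, Equiv.Perm.mul_apply, Equiv.swap_apply_left] at this
    have h0 : Dmap i b 1 = Dmap i b 0 := by rw [Dmap_zero, ← this]
    have : (1 : Fin (n + 3)) = 0 := (Dmap i b).injective h0
    exact absurd this (Fin.ne_of_val_ne (by simp))
  · rw [Fmap_neg i a ha, Fmap_pos i b hb] at h'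
    exfalso
    have : (Dmap i a * Equiv.swap 0 1 : Equiv.Perm (Fin (n + 3))) 0 = Dmap i b 0 := by rw [h']
    rw [Dmap_zero, Equiv.Perm.mul_apply, Equiv.swap_apply_left] at this
    have h0 : Dmap i a 1 = Dmap i a 0 := by rw [Dmap_zero, this]
    have : (1 : Fin (n + 3)) = 0 := (Dmap i a).injective h0
    exact absurd this (Fin.ne_of_val_ne (by simp))
  · rw [Fmap_neg i a ha, Fmap_neg i b hb] at h'
    exact Dmap_inj i (mul_right_cancel h')

lemma Fmap_surj (i : Fin (n + 3)) : Function.Surjective (Fmap i) := by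
  rintro ⟨⟨σ, hσ⟩, hs⟩
  by_cases h0 : σ 0 = i
  · obtain ⟨g, hg⟩ := Dmap_surj i σ h0
    have hsign : Equiv.Perm.sign (Dmap i g) = 1 := by
      rw [hg]; exact Equiv.Perm.mem_alternatingGroup.1 hσ
    refine ⟨g, ?_⟩
    apply Subtype.ext; apply Subtype.ext
    rw [Fmap_pos i g hsign, hg]
  · have h1 : σ 1 = i := hs.resolve_left h0
    obtain ⟨g, hg⟩ := Dmap_surj i (σ * Equiv.swap 0 1)
      (by rw [Equiv.Perm.mul_apply, Equiv.swap_apply_left, h1])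
    have hsign : ¬ Equiv.Perm.sign (Dmap i g) = 1 := by
      rw [hg, Equiv.Perm.sign_mul, Equiv.Perm.sign_swap (Fin.ne_of_val_ne (by simp)),
        Equiv.Perm.mem_alternatingGroup.1 hσ]
      decide
    refine ⟨g, ?_⟩
    apply Subtype.ext; apply Subtype.ext
    rw [Fmap_neg i g hsign, hg, mul_assoc, Equiv.swap_mul_self, mul_one]

/-! ### Adjacency transfer -/

lemma adj_char (i : Fin (n + 3)) (g h : Perm (Fin (n + 2))) :
    (∃ j : Fin (n + 3), 2 ≤ j.val ∧ Dmap i h = Dmap i g * Equiv.swap 1 j) ↔ starAdj g h := by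
  constructor
  · rintro ⟨j, hj, hD⟩
    have hjv : j.val < n + 3 := j.isLt
    refine ⟨⟨j.val - 1, by omega⟩, by simp only [Fin.val_mk]; omega, ?_⟩
    apply Dmap_inj i
    rw [Dmap_mul_swap, hD]
    congr 2
    apply Fin.ext
    simp only [Fin.val_succ, Fin.val_mk]
    omega
  · rintro ⟨j', hj', rfl⟩
    refine ⟨j'.succ, by simp only [Fin.val_succ]; omega, ?_⟩
    rw [Dmap_mul_swap]

lemma adj_sign (i : Fin (n + 3)) {g h : Perm (Fin (n + 2))} (hadj : starAdj g h) :
    Equiv.Perm.sign (Dmap i h) = - Equiv.Perm.sign (Dmap i g) := by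
  obtain ⟨j', hj', rfl⟩ := hadj
  rw [Dmap_mul_swap, Equiv.Perm.sign_mul, Equiv.Perm.sign_swap
    (Fin.ne_of_val_ne (by simp only [Fin.val_one, Fin.val_succ]; omega)), mul_neg_one]

lemma arc_iff (i : Fin (n + 3)) (g h : Perm (Fin (n + 2))) :
    (starArc (Fmap i g).1 (Fmap i h).1 ∨ starArc (Fmap i h).1 (Fmap i g).1) ↔ starAdj g h := by
  by_cases hg : Equiv.Perm.sign (Dmap i g) = 1 <;>
    by_cases hh : Equiv.Perm.sign (Dmap i h) = 1
  · rw [iff_iff_implies_and_implies]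
    constructor
    · rintro (⟨j, hj, e⟩ | ⟨j, hj, e⟩)
      · rw [Fmap_pos i g hg, Fmap_pos i h hh] at e
        exact absurd e (no_arc_AA j (Dmap_zero i g) (Dmap_zero i h) hj)
      · rw [Fmap_pos i g hg, Fmap_pos i h hh] at e
        exact absurd e (no_arc_AA j (Dmap_zero i h) (Dmap_zero i g) hj)
    · intro hadj
      exfalso
      have := adj_sign i hadj
      rw [hg, hh] at this
      exact absurd this (by decide)
  · constructor
    · rintro (⟨j, hj, e⟩ | ⟨j, hj, e⟩)
      · rw [Fmap_pos i g hg, Fmap_neg i h hh] at e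
        exact (adj_char i g h).1 ⟨j, hj, (arc_AB j).1 e⟩
      · rw [Fmap_pos i g hg, Fmap_neg i h hh] at e
        exact absurd e (no_arc_BA j (Dmap_zero i h) (Dmap_zero i g) hj)
    · intro hadj
      left
      obtain ⟨j, hj, e⟩ := (adj_char i g h).2 hadj
      exact ⟨j, hj, by rw [Fmap_pos i g hg, Fmap_neg i h hh]; exact (arc_AB j).2 e⟩
  · constructor
    · rintro (⟨j, hj, e⟩ | ⟨j, hj, e⟩)
      · rw [Fmap_neg i g hg, Fmap_pos i h hh] at e
        exact absurd e (no_arc_BA j (Dmap_zero i g) (Dmap_zero i h) hj)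
      · rw [Fmap_neg i g hg, Fmap_pos i h hh] at e
        exact starAdj_symm.1 ((adj_char i h g).1 ⟨j, hj, (arc_AB j).1 e⟩)
    · intro hadj
      right
      obtain ⟨j, hj, e⟩ := (adj_char i h g).2 (starAdj_symm.1 hadj)
      exact ⟨j, hj, by rw [Fmap_neg i g hg, Fmap_pos i h hh]; exact (arc_AB j).2 e⟩
  · rw [iff_iff_implies_and_implies]
    constructor
    · rintro (⟨j, hj, e⟩ | ⟨j, hj, e⟩)
      · rw [Fmap_neg i g hg, Fmap_neg i h hh] at e
        exact absurd e (no_arc_BB j (Dmap_zero i g) (Dmap_zero i h) hj)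
      · rw [Fmap_neg i g hg, Fmap_neg i h hh] at e
        exact absurd e (no_arc_BB j (Dmap_zero i h) (Dmap_zero i g) hj)
    · intro hadj
      exfalso
      have := adj_sign i hadj
      rcases Int.units_eq_one_or (Equiv.Perm.sign (Dmap i g)) with h1 | h1
      · exact hg h1
      rcases Int.units_eq_one_or (Equiv.Perm.sign (Dmap i h)) with h2 | h2
      · exact hh h2
      rw [h1, h2] at this
      exact absurd this (by decide)

end StarAux

open Equiv Equiv.Perm in
/-- For every integer `n ≥ 2` (here written `n + 2`) and every `i ∈ {0, …, n}`:
every arc of `ST⃗_{n+1}` with both endpoints in `S_i` goes from a vertex `σ` with `σ 0 = i`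
to a vertex `τ` with `τ 1 = i`; in the subdigraph induced on `S_i` every vertex `σ` with
`σ 0 = i` is a source and every vertex `τ` with `τ 1 = i` is a sink; the two parts
`{σ : σ 0 = i}` and `{τ : τ 1 = i}` are each stable; and the underlying undirected graph of
the subdigraph induced on `S_i` is isomorphic to the star graph `ST_n`. -/
theorem stmt2 (n : ℕ) (i : Fin (n + 3)) :
    (∀ σ τ : StarVertex (n + 3), σ ∈ Sset (n + 3) i → τ ∈ Sset (n + 3) i → starArc σ τ →
        (σ : Equiv.Perm (Fin (n + 3))) 0 = i ∧ (τ : Equiv.Perm (Fin (n + 3))) 1 = i) ∧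
    (∀ σ : StarVertex (n + 3), σ ∈ Sset (n + 3) i → (σ : Equiv.Perm (Fin (n + 3))) 0 = i →
        ∀ u ∈ Sset (n + 3) i, ¬ starArc u σ) ∧
    (∀ τ : StarVertex (n + 3), τ ∈ Sset (n + 3) i → (τ : Equiv.Perm (Fin (n + 3))) 1 = i →
        ∀ u ∈ Sset (n + 3) i, ¬ starArc τ u) ∧
    (∀ σ τ : StarVertex (n + 3),
        (σ : Equiv.Perm (Fin (n + 3))) 0 = i → (τ : Equiv.Perm (Fin (n + 3))) 0 = i →
        ¬ starArc σ τ) ∧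
    (∀ σ τ : StarVertex (n + 3),
        (σ : Equiv.Perm (Fin (n + 3))) 1 = i → (τ : Equiv.Perm (Fin (n + 3))) 1 = i →
        ¬ starArc σ τ) ∧
    (∃ f : ↥(Sset (n + 3) i) ≃ Equiv.Perm (Fin (n + 2)),
      ∀ a b : ↥(Sset (n + 3) i),
        (starArc a.1 b.1 ∨ starArc b.1 a.1) ↔ starAdj (f a) (f b)) := by
  have zne1 : (0 : Fin (n + 3)) ≠ 1 := Fin.ne_of_val_ne (by simp)
  have key : ∀ σ τ : StarVertex (n + 3), σ ∈ Sset (n + 3) i → τ ∈ Sset (n + 3) i →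
      starArc σ τ →
      (σ : Equiv.Perm (Fin (n + 3))) 0 = i ∧ (τ : Equiv.Perm (Fin (n + 3))) 1 = i := by
    rintro σ τ hσ hτ ⟨j, hj, e⟩
    have hτ1 : (τ : Perm (Fin (n + 3))) 1 = (σ : Perm (Fin (n + 3))) 0 := by
      rw [e, Equiv.Perm.mul_apply, gcyc_one j hj]
    have hσ0 : (σ : Perm (Fin (n + 3))) 0 = i := by
      rcases hσ with h0 | h1
      · exact h0
      · exfalso
        rcases hτ with t0 | t1
        · have h2 : (τ : Perm (Fin (n + 3))) 0 = (σ : Perm (Fin (n + 3))) j := by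
            rw [e, Equiv.Perm.mul_apply, gcyc_zero]
          have hj1 : j = 1 := (σ : Perm (Fin (n + 3))).injective (by rw [← h2, t0, h1])
          exact absurd hj1 (jne1 j hj)
        · have h2 : (σ : Perm (Fin (n + 3))) 0 = (σ : Perm (Fin (n + 3))) 1 := by
            rw [← hτ1, t1, h1]
          exact zne1 ((σ : Perm (Fin (n + 3))).injective h2)
    exact ⟨hσ0, by rw [hτ1, hσ0]⟩
  refine ⟨key, ?_, ?_, ?_, ?_, ?_⟩
  · intro σ hσ hσ0 u hu harc
    obtain ⟨-, hσ1⟩ := key u σ hu hσ harc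
    exact zne1 ((σ : Perm (Fin (n + 3))).injective (by rw [hσ0, hσ1]) : (0 : Fin (n+3)) = 1)
  · intro τ hτ hτ1 u hu harc
    obtain ⟨hτ0, -⟩ := key τ u hτ hu harc
    exact zne1 ((τ : Perm (Fin (n + 3))).injective (by rw [hτ0, hτ1]) : (0 : Fin (n+3)) = 1)
  · rintro σ τ hσ0 hτ0 ⟨j, hj, e⟩
    exact no_arc_AA j hσ0 hτ0 hj e
  · rintro σ τ hσ1 hτ1 ⟨j, hj, e⟩
    have h2 : (τ : Perm (Fin (n + 3))) 1 = (σ : Perm (Fin (n + 3))) 0 := by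
      rw [e, Equiv.Perm.mul_apply, gcyc_one j hj]
    have h3 : (σ : Perm (Fin (n + 3))) 0 = (σ : Perm (Fin (n + 3))) 1 := by
      rw [← h2, hτ1, hσ1]
    exact zne1 ((σ : Perm (Fin (n + 3))).injective h3)
  · have hbij : Function.Bijective (Fmap i) := ⟨Fmap_inj i, Fmap_surj i⟩
    refine ⟨(Equiv.ofBijective _ hbij).symm, fun a b => ?_⟩
    obtain ⟨g, rfl⟩ := Fmap_surj i a
    obtain ⟨h, rfl⟩ := Fmap_surj i b
    have e1 : (Equiv.ofBijective _ hbij).symm (Fmap i g) = g :=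
      Equiv.symm_apply_apply _ g
    have e2 : (Equiv.ofBijective _ hbij).symm (Fmap i h) = h :=
      Equiv.symm_apply_apply _ h
    rw [e1, e2]
    exact arc_iff i g h
end

section
/- For every integer n ≥ 2, the star digraph ST⃗_n is strongly connected: for any two even permutations σ, τ ∈ Alt_n there is a directed path in ST⃗_n from σ to τ. -/
namespace Stmt8Aux

variable {n : ℕ}

/-- The generating set of the star digraph. -/
def genSet (n : ℕ) : Set (Equiv.Perm (Fin (n + 2))) :=
  {π | ∃ i : Fin (n + 2), 2 ≤ i.val ∧ π = gcyc i}

local notation "H" => Subgroup.closure (genSet n)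

lemma zero_ne_one'' : (0 : Fin (n + 2)) ≠ 1 := by
  intro h
  have := congrArg Fin.val h
  simp at this

lemma ne01 {i : Fin (n + 2)} (hi : 2 ≤ i.val) : i ≠ 0 ∧ i ≠ 1 := by
  constructor <;> · intro h; subst h; simp at hi

lemma ge2 {i : Fin (n + 2)} (h0 : i ≠ 0) (h1 : i ≠ 1) : 2 ≤ i.val := by
  have h0' : i.val ≠ 0 := fun h => h0 (Fin.val_injective h)
  have h1' : i.val ≠ 1 := fun h => h1 (Fin.val_injective h)
  omega

lemma gcyc_mem {i : Fin (n + 2)} (hi : 2 ≤ i.val) : gcyc i ∈ H :=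
  Subgroup.subset_closure ⟨i, hi, rfl⟩

lemma gcyc_sign {i : Fin (n + 2)} (hi : 2 ≤ i.val) :
    Equiv.Perm.sign (gcyc i) = 1 := by
  obtain ⟨_, h1⟩ := ne01 hi
  rw [gcyc, map_mul, Equiv.Perm.sign_swap (Ne.symm h1),
    Equiv.Perm.sign_swap zero_ne_one'']
  decide

lemma genSet_le_alternating : H ≤ alternatingGroup (Fin (n + 2)) := by
  rw [Subgroup.closure_le]
  rintro π ⟨i, hi, rfl⟩
  exact Equiv.Perm.mem_alternatingGroup.mpr (gcyc_sign hi)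

/-- Key lemma: `swap 0 1 * swap a b` is in the closure. -/
lemma key {a b : Fin (n + 2)} (hab : a ≠ b) :
    Equiv.swap 0 1 * Equiv.swap a b ∈ H := by
  have s01 : (Equiv.swap (0 : Fin (n+2)) 1) * Equiv.swap 0 1 = 1 :=
    Equiv.swap_mul_self _ _
  have case0 : ∀ b : Fin (n + 2), 2 ≤ b.val →
      Equiv.swap 0 1 * Equiv.swap 0 b ∈ H := by
    intro b hb
    obtain ⟨hb0, hb1⟩ := ne01 hb
    have : Equiv.swap (0:Fin (n+2)) 1 * Equiv.swap 0 b = gcyc b := by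
      rw [gcyc, Equiv.mul_swap_eq_swap_mul, Equiv.swap_apply_left,
        Equiv.swap_apply_of_ne_of_ne hb0 hb1]
    rw [this]; exact gcyc_mem hb
  have case1 : ∀ b : Fin (n + 2), 2 ≤ b.val →
      Equiv.swap 0 1 * Equiv.swap 1 b ∈ H := by
    intro b hb
    have : Equiv.swap (0:Fin (n+2)) 1 * Equiv.swap 1 b = (gcyc b)⁻¹ := by
      rw [gcyc, mul_inv_rev, Equiv.swap_inv, Equiv.swap_inv]
    rw [this]; exact inv_mem (gcyc_mem hb)
  by_cases ha0 : a = 0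
  · subst ha0
    by_cases hb1 : b = 1
    · subst hb1; rw [s01]; exact one_mem _
    · exact case0 b (ge2 (Ne.symm hab) hb1)
  · by_cases ha1 : a = 1
    · subst ha1
      by_cases hb0 : b = 0
      · subst hb0
        rw [Equiv.swap_comm 1 0, s01]; exact one_mem _
      · exact case1 b (ge2 hb0 (Ne.symm hab))
    · by_cases hb0 : b = 0
      · subst hb0; rw [Equiv.swap_comm a 0]; exact case0 a (ge2 ha0 ha1)
      · by_cases hb1 : b = 1
        · subst hb1; rw [Equiv.swap_comm a 1]; exact case1 a (ge2 ha0 ha1)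
        · -- both a b ≥ 2
          have ha := ge2 ha0 ha1
          have hb := ge2 hb0 hb1
          have hta : Equiv.swap (1:Fin (n+2)) a * Equiv.swap 1 b *
              Equiv.swap 1 a = Equiv.swap a b := by
            have := Equiv.swap_mul_swap_mul_swap
              (x := b) (y := (1:Fin (n+2))) (z := a) hb1 (Ne.symm hab)
            rwa [Equiv.swap_comm b 1] at this
          have decomp : Equiv.swap (0:Fin (n+2)) 1 * Equiv.swap a b =
              (Equiv.swap 0 1 * Equiv.swap 1 a) * (gcyc b) *
                (Equiv.swap 0 1 * Equiv.swap 1 a) := by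
            rw [gcyc, ← hta]
            simp only [mul_assoc, Equiv.swap_mul_self_mul]
          rw [decomp]
          have hmem : Equiv.swap (0:Fin (n+2)) 1 * Equiv.swap 1 a ∈ H :=
            case1 a ha
          exact mul_mem (mul_mem hmem (gcyc_mem hb)) hmem

/-- Every even permutation is in the closure. -/
lemma even_mem (π : Equiv.Perm (Fin (n + 2)))
    (hπ : Equiv.Perm.sign π = 1) : π ∈ H := by
  suffices h : (Equiv.Perm.sign π = 1 → π ∈ H) ∧
      (Equiv.Perm.sign π = -1 → Equiv.swap 0 1 * π ∈ H) from h.1 hπ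
  clear hπ
  refine Equiv.Perm.swap_induction_on π ⟨fun _ => one_mem _, fun h => ?_⟩ ?_
  · rw [map_one] at h
    exact absurd h (by decide)
  · rintro f x y hxy ⟨ih1, ih2⟩
    have hs : Equiv.Perm.sign (Equiv.swap x y * f) = - Equiv.Perm.sign f := by
      rw [map_mul, Equiv.Perm.sign_swap hxy, neg_one_mul]
    constructor
    · intro h
      rw [hs] at h
      have hf : Equiv.Perm.sign f = -1 := by
        rw [← neg_neg (Equiv.Perm.sign f), h]
      have h1 : Equiv.swap 0 1 * f ∈ H := ih2 hf
      have h2 : Equiv.swap x y * Equiv.swap 0 1 ∈ H := by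
        have := inv_mem (key (a := x) (b := y) hxy)
        rwa [mul_inv_rev, Equiv.swap_inv, Equiv.swap_inv] at this
      have : Equiv.swap x y * f =
          (Equiv.swap x y * Equiv.swap 0 1) * (Equiv.swap 0 1 * f) := by
        simp only [mul_assoc, Equiv.swap_mul_self_mul]
      rw [this]
      exact mul_mem h2 h1
    · intro h
      rw [hs] at h
      have hf : Equiv.Perm.sign f = 1 := by
        rw [← neg_neg (Equiv.Perm.sign f), h]; decide
      have : Equiv.swap (0:Fin (n+2)) 1 * (Equiv.swap x y * f) =
          (Equiv.swap 0 1 * Equiv.swap x y) * f := by rw [mul_assoc]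
      rw [this]
      exact mul_mem (key hxy) (ih1 hf)

/-- Reachability for elements of the closure. -/
lemma reach {π : Equiv.Perm (Fin (n + 2))} (hπ : π ∈ H) :
    ∀ σ τ : StarVertex (n + 2),
      (τ : Equiv.Perm (Fin (n + 2))) = (σ : Equiv.Perm (Fin (n + 2))) * π →
        Relation.ReflTransGen starArc σ τ := by
  induction hπ using Subgroup.closure_induction with
  | mem x hx =>
    obtain ⟨i, hi, rfl⟩ := hx
    exact fun σ τ hτ => Relation.ReflTransGen.single ⟨i, hi, hτ⟩
  | one =>
    intro σ τ hτ
    rw [mul_one] at hτ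
    exact Subtype.ext hτ ▸ Relation.ReflTransGen.refl
  | mul x y hx hy ihx ihy =>
    intro σ τ hτ
    have hxa : x ∈ alternatingGroup (Fin (n + 2)) := genSet_le_alternating hx
    set ρ : StarVertex (n + 2) := ⟨(σ : Equiv.Perm (Fin (n+2))) * x,
      mul_mem σ.2 hxa⟩ with hρ
    exact (ihx σ ρ rfl).trans (ihy ρ τ (by rw [hτ, hρ, mul_assoc]))
  | inv x hx ihx =>
    have hpow : ∀ k : ℕ, ∀ σ τ : StarVertex (n + 2),
        (τ : Equiv.Perm (Fin (n + 2))) =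
          (σ : Equiv.Perm (Fin (n + 2))) * x ^ k →
        Relation.ReflTransGen starArc σ τ := by
      intro k
      induction k with
      | zero =>
        intro σ τ hτ
        rw [pow_zero, mul_one] at hτ
        exact Subtype.ext hτ ▸ Relation.ReflTransGen.refl
      | succ k ih =>
        intro σ τ hτ
        have hxka : x ^ k ∈ alternatingGroup (Fin (n + 2)) :=
          genSet_le_alternating (pow_mem hx k)
        set ρ : StarVertex (n + 2) := ⟨(σ : Equiv.Perm (Fin (n+2))) * x ^ k,
          mul_mem σ.2 hxka⟩ with hρ
        refine (ih σ ρ rfl).trans (ihx ρ τ ?_)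
        rw [hτ, hρ, pow_succ, mul_assoc]
    have hx_pos : 0 < orderOf x := orderOf_pos x
    have hone : x * x ^ (orderOf x - 1) = 1 := by
      rw [← pow_succ', Nat.sub_add_cancel hx_pos, pow_orderOf_eq_one]
    have hinv : x⁻¹ = x ^ (orderOf x - 1) := inv_eq_of_mul_eq_one_right hone
    intro σ τ hτ
    rw [hinv] at hτ
    exact hpow _ σ τ hτ

end Stmt8Aux

/-- For every integer `n ≥ 2` (here written `n + 2`), the star digraph `ST⃗_n` is strongly
connected: between any two even permutations there is a directed path. -/
theorem stmt8 (n : ℕ) (σ τ : StarVertex (n + 2)) :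
    Relation.ReflTransGen starArc σ τ := by
  have hmem : (σ : Equiv.Perm (Fin (n + 2)))⁻¹ * τ ∈
      Subgroup.closure (Stmt8Aux.genSet n) := by
    apply Stmt8Aux.even_mem
    exact Equiv.Perm.mem_alternatingGroup.mp (mul_mem (inv_mem σ.2) τ.2)
  exact Stmt8Aux.reach hmem σ τ (by rw [mul_inv_cancel_left])
end

section
/- For every integer n ≥ 3, every arc of the star digraph ST⃗_n lies in exactly one directed cycle of length 3: the arc from σ to σ∘g_i lies in the directed triangle with vertex sequence (σ, σ∘g_i, σ∘g_i²), and there is no other directed 3-cycle of ST⃗_n containing that arc. -/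
section helpers
variable {n : ℕ}

lemma ne01 {i : Fin (n+3)} (hi : 2 ≤ i.val) : i ≠ 0 ∧ i ≠ 1 := by
  constructor <;> (intro h; subst h; simp at hi)

lemma gcyc_zero_s9 {i : Fin (n+3)} (hi : 2 ≤ i.val) : gcyc i 0 = i := by
  obtain ⟨h0, h1⟩ := ne01 hi
  simp [gcyc, Equiv.Perm.mul_apply, Equiv.swap_apply_def]

lemma gcyc_one_s9 {i : Fin (n+3)} (hi : 2 ≤ i.val) : gcyc i 1 = 0 := by
  obtain ⟨h0, h1⟩ := ne01 hi
  simp [gcyc, Equiv.Perm.mul_apply, Equiv.swap_apply_def, h0.symm, h1.symm]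

lemma gcyc_self {i : Fin (n+3)} (hi : 2 ≤ i.val) : gcyc i i = 1 := by
  obtain ⟨h0, h1⟩ := ne01 hi
  simp [gcyc, Equiv.Perm.mul_apply, Equiv.swap_apply_def, h0, h1]

lemma gcyc_other {i x : Fin (n+3)} (hx0 : x ≠ 0) (hx1 : x ≠ 1) (hxi : x ≠ i) :
    gcyc i x = x := by
  simp [gcyc, Equiv.Perm.mul_apply, Equiv.swap_apply_def, hx0, hx1, hxi]

lemma gcyc_cube {i : Fin (n+3)} (hi : 2 ≤ i.val) : gcyc i * (gcyc i * gcyc i) = 1 := by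
  ext x
  rcases eq_or_ne x 0 with rfl | hx0
  · simp [Equiv.Perm.mul_apply, gcyc_zero_s9 hi, gcyc_one_s9 hi, gcyc_self hi]
  rcases eq_or_ne x 1 with rfl | hx1
  · simp [Equiv.Perm.mul_apply, gcyc_zero_s9 hi, gcyc_one_s9 hi, gcyc_self hi]
  rcases eq_or_ne x i with rfl | hxi
  · simp [Equiv.Perm.mul_apply, gcyc_zero_s9 hi, gcyc_one_s9 hi, gcyc_self hi]
  · simp [Equiv.Perm.mul_apply, gcyc_other hx0 hx1 hxi]

lemma gcyc_mem_s9 {i : Fin (n+3)} (hi : 2 ≤ i.val) :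
    gcyc i ∈ alternatingGroup (Fin (n+3)) := by
  obtain ⟨h0, h1⟩ := ne01 hi
  rw [Equiv.Perm.mem_alternatingGroup, gcyc, map_mul,
    Equiv.Perm.sign_swap h1.symm, Equiv.Perm.sign_swap (zero_ne_one)]
  decide

lemma key {i j k : Fin (n+3)} (hi : 2 ≤ i.val) (hj : 2 ≤ j.val) (hk : 2 ≤ k.val)
    (h : gcyc i * gcyc j * gcyc k = 1) : j = i ∧ k = i := by
  obtain ⟨hj0, hj1⟩ := ne01 hj
  have hji : j = i := by
    by_contra hji
    have := Equiv.ext_iff.mp h 1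
    simp only [Equiv.Perm.mul_apply, Equiv.Perm.one_apply] at this
    rw [gcyc_one_s9 hk, gcyc_zero_s9 hj, gcyc_other hj0 hj1 hji] at this
    exact hj1 this
  subst hji
  have hkj : k = j := by
    by_contra hkj
    have := Equiv.ext_iff.mp h j
    simp only [Equiv.Perm.mul_apply, Equiv.Perm.one_apply] at this
    rw [gcyc_other hj0 hj1 (Ne.symm hkj), gcyc_self hj, gcyc_one_s9 hj] at this
    exact hj0 this.symm
  exact ⟨rfl, hkj⟩

end helpers


/-- For every `n ≥ 3` (here written `n + 3`), every arc of `ST⃗_n` lies in exactly one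
directed 3-cycle: the arc from `σ` to `σ ∘ gᵢ` lies in the directed triangle
`(σ, σ ∘ gᵢ, σ ∘ gᵢ²)`, and in no other directed 3-cycle. -/
theorem stmt9 (n : ℕ) (σ τ : StarVertex (n + 3)) (i : Fin (n + 3)) (hi : 2 ≤ i.val)
    (hτ : (τ : Equiv.Perm (Fin (n + 3))) = (σ : Equiv.Perm (Fin (n + 3))) * gcyc i) :
    (∃! w : StarVertex (n + 3), starArc τ w ∧ starArc w σ) ∧
    (∀ w : StarVertex (n + 3), starArc τ w → starArc w σ →
      (w : Equiv.Perm (Fin (n + 3)))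
        = (σ : Equiv.Perm (Fin (n + 3))) * (gcyc i * gcyc i)) := by
  have huniq : ∀ w : StarVertex (n + 3), starArc τ w → starArc w σ →
      (w : Equiv.Perm (Fin (n + 3))) = σ.1 * (gcyc i * gcyc i) := by
    rintro w ⟨j, hj, hw⟩ ⟨k, hk, hσ⟩
    have h : σ.1 * (gcyc i * gcyc j * gcyc k) = σ.1 * 1 := by
      rw [mul_one]
      conv_rhs => rw [hσ, hw, hτ]
      group
    have h2 : gcyc i * gcyc j * gcyc k = 1 := mul_left_cancel h
    obtain ⟨hji, hki⟩ := key hi hj hk h2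
    rw [hw, hτ, hji, mul_assoc]
  refine ⟨⟨⟨σ.1 * (gcyc i * gcyc i), ?_⟩, ⟨⟨i, hi, by rw [hτ]; group⟩,
    ⟨i, hi, ?_⟩⟩, fun w ⟨h1, h2⟩ => Subtype.ext (huniq w h1 h2)⟩, huniq⟩
  · exact mul_mem σ.2 (mul_mem (gcyc_mem_s9 hi) (gcyc_mem_s9 hi))
  · show σ.1 = σ.1 * (gcyc i * gcyc i) * gcyc i
    rw [mul_assoc, mul_assoc (gcyc i), gcyc_cube hi, mul_one]
end

section
/- Let n ≥ 2, i ∈ {1,…,n} and j ∈ {2,…,n}. Then the set {σ ∈ Alt_{n+1} : σ(j) = i and (σ(0) = 0 or σ(1) = 0)} is a worst-case efficient dominating set of the subdigraph of ST⃗_{n+1} induced on V_{i,j} = {σ ∈ Alt_{n+1} : σ(j) = i}. Moreover, for each fixed j ∈ {2,…,n}, the n sets {σ ∈ Alt_{n+1} : σ(j) = i and (σ(0) = 0 or σ(1) = 0)}, for i = 1,…,n, form a partition of S_0 = {σ ∈ Alt_{n+1} : σ(0) = 0 or σ(1) = 0}. -/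
/-- The set `V_{i,j} = {σ ∈ Alt_m : σ j = i}`. -/
def Vset (m : ℕ) (i j : Fin m) : Set (StarVertex m) :=
  {σ | (σ : Equiv.Perm (Fin m)) j = i}

namespace Aux
variable {M : ℕ}

lemma ne01 {k : Fin (M+3)} (hk : 2 ≤ k.val) : k ≠ 0 ∧ k ≠ 1 := by
  constructor <;> intro h <;> subst h <;> simp [Fin.val_one] at hk

lemma two_le_of_ne {k : Fin (M+3)} (h0 : k ≠ 0) (h1 : k ≠ 1) : 2 ≤ k.val := by
  have h0' : k.val ≠ 0 := fun h => h0 (Fin.ext (by simp [h]))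
  have h1' : k.val ≠ 1 := fun h => h1 (Fin.ext (by simp [h, Fin.val_one]))
  omega

lemma gcyc_zero {k : Fin (M+3)} : gcyc k 0 = k := by
  simp [gcyc, Equiv.Perm.mul_apply]

lemma gcyc_one {k : Fin (M+3)} (hk : 2 ≤ k.val) : gcyc k 1 = 0 := by
  obtain ⟨h0, h1⟩ := ne01 hk
  rw [gcyc, Equiv.Perm.mul_apply, Equiv.swap_apply_right,
    Equiv.swap_apply_of_ne_of_ne zero_ne_one (Ne.symm h0)]

lemma gcyc_self {k : Fin (M+3)} (hk : 2 ≤ k.val) : gcyc k k = 1 := by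
  obtain ⟨h0, h1⟩ := ne01 hk
  rw [gcyc, Equiv.Perm.mul_apply, Equiv.swap_apply_of_ne_of_ne h0 h1,
    Equiv.swap_apply_right]

lemma gcyc_other {k x : Fin (M+3)} (h0 : x ≠ 0) (h1 : x ≠ 1) (hx : x ≠ k) :
    gcyc k x = x := by
  rw [gcyc, Equiv.Perm.mul_apply, Equiv.swap_apply_of_ne_of_ne h0 h1,
    Equiv.swap_apply_of_ne_of_ne h1 hx]

lemma gcyc_mem_alt {k : Fin (M+3)} (hk : 2 ≤ k.val) :
    gcyc k ∈ alternatingGroup (Fin (M+3)) := by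
  obtain ⟨h0, h1⟩ := ne01 hk
  rw [Equiv.Perm.mem_alternatingGroup, gcyc, map_mul,
    Equiv.Perm.sign_swap (Ne.symm h1), Equiv.Perm.sign_swap zero_ne_one]
  norm_num

lemma gcyc_inv_zero {k : Fin (M+3)} (hk : 2 ≤ k.val) : (gcyc k)⁻¹ 0 = 1 :=
  (gcyc k).injective (by rw [Equiv.Perm.coe_inv, Equiv.apply_symm_apply, gcyc_one hk])

lemma gcyc_inv_one {k : Fin (M+3)} (hk : 2 ≤ k.val) : (gcyc k)⁻¹ 1 = k :=
  (gcyc k).injective (by rw [Equiv.Perm.coe_inv, Equiv.apply_symm_apply, gcyc_self hk])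

lemma gcyc_inv_self {k : Fin (M+3)} : (gcyc k)⁻¹ k = 0 :=
  (gcyc k).injective (by rw [Equiv.Perm.coe_inv, Equiv.apply_symm_apply, gcyc_zero])

lemma gcyc_inv_other {k x : Fin (M+3)} (h0 : x ≠ 0) (h1 : x ≠ 1) (hx : x ≠ k) :
    (gcyc k)⁻¹ x = x :=
  (gcyc k).injective (by rw [Equiv.Perm.coe_inv, Equiv.apply_symm_apply, gcyc_other h0 h1 hx])

end Aux

/-- For `n ≥ 2`, `i ∈ {1, …, n}` and `j ∈ {2, …, n}`: the set
`{σ ∈ Alt_{n+1} : σ j = i and (σ 0 = 0 or σ 1 = 0)}` is a worst-case efficient dominating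
set of the subdigraph of `ST⃗_{n+1}` induced on `V_{i,j}`; moreover, for fixed `j`, these
sets for `i = 1, …, n` partition `S_0`. -/
theorem stmt12 (n : ℕ) (hn : 2 ≤ n) (i j : Fin (n + 1)) (hi : 1 ≤ i.val) (hj : 2 ≤ j.val) :
    IsWCEDS (fun a b : ↥(Vset (n + 1) i j) => starArc a.1 b.1)
      {a : ↥(Vset (n + 1) i j) |
        (a.1 : Equiv.Perm (Fin (n + 1))) 0 = 0 ∨ (a.1 : Equiv.Perm (Fin (n + 1))) 1 = 0} ∧
    (⋃ i' ∈ {i' : Fin (n + 1) | 1 ≤ i'.val},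
        {σ : StarVertex (n + 1) | (σ : Equiv.Perm (Fin (n + 1))) j = i' ∧
          ((σ : Equiv.Perm (Fin (n + 1))) 0 = 0 ∨ (σ : Equiv.Perm (Fin (n + 1))) 1 = 0)})
      = Sset (n + 1) 0 ∧
    (∀ i₁ i₂ : Fin (n + 1), 1 ≤ i₁.val → 1 ≤ i₂.val → i₁ ≠ i₂ →
      Disjoint
        {σ : StarVertex (n + 1) | (σ : Equiv.Perm (Fin (n + 1))) j = i₁ ∧
          ((σ : Equiv.Perm (Fin (n + 1))) 0 = 0 ∨ (σ : Equiv.Perm (Fin (n + 1))) 1 = 0)}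
        {σ : StarVertex (n + 1) | (σ : Equiv.Perm (Fin (n + 1))) j = i₂ ∧
          ((σ : Equiv.Perm (Fin (n + 1))) 0 = 0 ∨ (σ : Equiv.Perm (Fin (n + 1))) 1 = 0)}) := by
  obtain ⟨m, rfl⟩ : ∃ m, n = m + 2 := ⟨n - 2, by omega⟩
  have hi0 : i ≠ 0 := fun h => by subst h; simp at hi
  have hj0 : j ≠ 0 := (Aux.ne01 hj).1
  have hj1 : j ≠ 1 := (Aux.ne01 hj).2
  refine ⟨⟨?_, ?_⟩, ?_, ?_⟩
  · -- perfect ±dominating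
    intro v hv
    simp only [Set.mem_setOf_eq, not_or] at hv
    obtain ⟨hv0, hv1⟩ := hv
    set π : Equiv.Perm (Fin (m + 3)) := (v.1 : Equiv.Perm (Fin (m + 3))) with hπ
    have hvj : π j = i := v.2
    set k : Fin (m + 3) := π⁻¹ 0 with hkdef
    have hπk : π k = 0 := Equiv.apply_symm_apply π 0
    have hk0 : k ≠ 0 := fun h => hv0 (h ▸ hπk)
    have hk1 : k ≠ 1 := fun h => hv1 (h ▸ hπk)
    have hk : 2 ≤ k.val := Aux.two_le_of_ne hk0 hk1
    have hkj : k ≠ j := by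
      intro h
      apply hi0
      rw [← hvj, ← h, hπk]
    constructor
    · -- unique in-neighbor
      refine ⟨⟨⟨π * (gcyc k)⁻¹,
          mul_mem v.1.2 (inv_mem (Aux.gcyc_mem_alt hk))⟩, ?_⟩,
        ⟨Or.inr ?_, ⟨k, hk, (inv_mul_cancel_right π (gcyc k)).symm⟩⟩, ?_⟩
      · show (π * (gcyc k)⁻¹) j = i
        rw [Equiv.Perm.mul_apply, Aux.gcyc_inv_other hj0 hj1 (Ne.symm hkj)]
        exact hvj
      · show (π * (gcyc k)⁻¹) 1 = 0
        rw [Equiv.Perm.mul_apply, Aux.gcyc_inv_one hk]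
        exact hπk
      · rintro u' ⟨hu'S, k', hk', heq⟩
        set ρ : Equiv.Perm (Fin (m + 3)) := (u'.1 : Equiv.Perm (Fin (m + 3))) with hρ
        have heq' : π = ρ * gcyc k' := heq
        have hρ0 : ρ 0 = π 1 := by
          rw [heq', Equiv.Perm.mul_apply, Aux.gcyc_one hk']
        have hρ1 : ρ 1 = π k' := by
          rw [heq', Equiv.Perm.mul_apply, Aux.gcyc_self hk']
        rcases hu'S with h | h
        · exact absurd (hρ0 ▸ h) hv1
        · have hπk' : π k' = 0 := by rw [← hρ1]; exact h
          have hkk : k' = k := π.injective (by rw [hπk, hπk'])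
          rw [hkk] at heq'
          exact Subtype.ext (Subtype.ext (eq_mul_inv_of_mul_eq heq'.symm))
    · -- unique out-neighbor
      refine ⟨⟨⟨π * gcyc k,
          mul_mem v.1.2 (Aux.gcyc_mem_alt hk)⟩, ?_⟩,
        ⟨Or.inl ?_, ⟨k, hk, rfl⟩⟩, ?_⟩
      · show (π * gcyc k) j = i
        rw [Equiv.Perm.mul_apply, Aux.gcyc_other hj0 hj1 (Ne.symm hkj)]
        exact hvj
      · show (π * gcyc k) 0 = 0
        rw [Equiv.Perm.mul_apply, Aux.gcyc_zero]
        exact hπk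
      · rintro w' ⟨hw'S, k', hk', heq⟩
        set ρ : Equiv.Perm (Fin (m + 3)) := (w'.1 : Equiv.Perm (Fin (m + 3))) with hρ
        have heq' : ρ = π * gcyc k' := heq
        have hρ0 : ρ 0 = π k' := by
          rw [heq', Equiv.Perm.mul_apply, Aux.gcyc_zero]
        have hρ1 : ρ 1 = π 0 := by
          rw [heq', Equiv.Perm.mul_apply, Aux.gcyc_one hk']
        rcases hw'S with h | h
        · have hπk' : π k' = 0 := by rw [← hρ0]; exact h
          have hkk : k' = k := π.injective (by rw [hπk, hπk'])
          rw [hkk] at heq'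
          exact Subtype.ext (Subtype.ext heq')
        · exact absurd (hρ1 ▸ h) hv0
  · -- ±stable
    intro v hv
    set π : Equiv.Perm (Fin (m + 3)) := (v.1 : Equiv.Perm (Fin (m + 3))) with hπ
    rcases hv with h0 | h1
    · left
      rintro u huS ⟨k, hk, heq⟩
      set ρ : Equiv.Perm (Fin (m + 3)) := (u.1 : Equiv.Perm (Fin (m + 3))) with hρ
      have heq' : π = ρ * gcyc k := heq
      rcases huS with h | h
      · have : π 1 = π 0 := by
          calc π 1 = (ρ * gcyc k) 1 := by rw [← heq']
            _ = ρ 0 := by rw [Equiv.Perm.mul_apply, Aux.gcyc_one hk]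
            _ = 0 := h
            _ = π 0 := h0.symm
        exact one_ne_zero (π.injective this)
      · have : π k = π 0 := by
          calc π k = (ρ * gcyc k) k := by rw [← heq']
            _ = ρ 1 := by rw [Equiv.Perm.mul_apply, Aux.gcyc_self hk]
            _ = 0 := h
            _ = π 0 := h0.symm
        exact (Aux.ne01 hk).1 (π.injective this)
    · right
      rintro w hwS ⟨k, hk, heq⟩
      set ρ : Equiv.Perm (Fin (m + 3)) := (w.1 : Equiv.Perm (Fin (m + 3))) with hρ
      have heq' : ρ = π * gcyc k := heq
      rcases hwS with h | h
      · have : π k = π 1 := by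
          calc π k = (π * gcyc k) 0 := by rw [Equiv.Perm.mul_apply, Aux.gcyc_zero]
            _ = ρ 0 := by rw [← heq']
            _ = 0 := h
            _ = π 1 := h1.symm
        exact (Aux.ne01 hk).2 (π.injective this)
      · have : π 0 = π 1 := by
          calc π 0 = (π * gcyc k) 1 := by rw [Equiv.Perm.mul_apply, Aux.gcyc_one hk]
            _ = ρ 1 := by rw [← heq']
            _ = 0 := h
            _ = π 1 := h1.symm
        exact zero_ne_one (π.injective this)
  · -- union
    ext σ
    simp only [Set.mem_iUnion, Set.mem_setOf_eq, Sset]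
    constructor
    · rintro ⟨i', ⟨hi', _, hS⟩⟩
      exact hS
    · intro hS
      refine ⟨(σ : Equiv.Perm (Fin (m + 3))) j, ⟨?_, rfl, hS⟩⟩
      have hne : (σ : Equiv.Perm (Fin (m + 3))) j ≠ 0 := by
        intro h
        rcases hS with h0 | h0
        · exact hj0 ((σ : Equiv.Perm (Fin (m + 3))).injective (by rw [h, h0]))
        · exact hj1 ((σ : Equiv.Perm (Fin (m + 3))).injective (by rw [h, h0]))
      exact Nat.one_le_iff_ne_zero.2 (fun h => hne (Fin.ext (by simp [h])))
  · -- disjoint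
    intro i₁ i₂ _ _ hne
    rw [Set.disjoint_left]
    rintro σ ⟨h1, _⟩ ⟨h2, _⟩
    exact hne (h1 ▸ h2)
end

section
/- The star digraph ST⃗_4, whose vertex set is the 12-element alternating group Alt_4, has no directed Hamiltonian cycle. -/
/-- Generator selected by a boolean: `g₃` for `true`, `g₂` for `false`. -/
def gb (b : Bool) : Equiv.Perm (Fin 4) := if b then gcyc 3 else gcyc 2

/-- Partial products of generators chosen by `s`. -/
def Ppath (s : ℕ → Bool) : ℕ → Equiv.Perm (Fin 4)
  | 0 => 1
  | n + 1 => Ppath s n * gb (s n)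

/-- Pruned DFS: is there a path of length `n` from `cur`, avoiding `vis`,
ending at `1`? -/
def grow : Equiv.Perm (Fin 4) → List (Equiv.Perm (Fin 4)) → ℕ → Bool
  | cur, _, 0 => decide (cur = 1)
  | cur, vis, n + 1 =>
      !(decide (cur ∈ vis)) &&
        (grow (cur * gb false) (cur :: vis) n || grow (cur * gb true) (cur :: vis) n)

set_option maxRecDepth 4000 in
theorem grow_false : grow 1 [] 12 = false := by decide

theorem grow_step (s : ℕ → Bool) :
    ∀ m n : ℕ, n + m = 12 →
      (∀ j k : ℕ, j < 12 → k < 12 → Ppath s j = Ppath s k → j = k) →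
      Ppath s 12 = 1 →
      grow (Ppath s n) (((List.range n).reverse).map (Ppath s)) m = true := by
  intro m
  induction m with
  | zero =>
      intro n hn _ h12
      have : n = 12 := by omega
      subst this
      simp [grow, h12]
  | succ m ih =>
      intro n hn hinj h12
      have hn12 : n < 12 := by omega
      have hmem : Ppath s n ∉ ((List.range n).reverse).map (Ppath s) := by
        intro hm
        rcases List.mem_map.1 hm with ⟨j, hj, hje⟩
        have hj' : j < n := List.mem_range.1 (List.mem_reverse.1 hj)
        have := hinj j n (by omega) hn12 hje
        omega
      have hlist : ((List.range (n+1)).reverse).map (Ppath s)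
          = Ppath s n :: ((List.range n).reverse).map (Ppath s) := by
        rw [List.range_succ, List.reverse_append]
        simp
      have hih := ih (n + 1) (by omega) hinj h12
      rw [hlist] at hih
      show (!(decide (Ppath s n ∈ ((List.range n).reverse).map (Ppath s))) &&
        (grow (Ppath s n * gb false) (Ppath s n :: ((List.range n).reverse).map (Ppath s)) m ||
         grow (Ppath s n * gb true) (Ppath s n :: ((List.range n).reverse).map (Ppath s)) m)) = true
      have hsucc : Ppath s (n+1) = Ppath s n * gb (s n) := rfl
      rw [Bool.and_eq_true, Bool.not_eq_true', decide_eq_false_iff_not, Bool.or_eq_true]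
      refine ⟨hmem, ?_⟩
      cases hsn : s n with
      | false =>
          rw [hsn] at hsucc
          rw [← hsucc, hih]
          exact Or.inl rfl
      | true =>
          rw [hsn] at hsucc
          rw [← hsucc, hih]
          exact Or.inr rfl

/-- The star digraph `ST⃗_4` (on the 12-element alternating group `Alt_4`) has no directed
Hamiltonian cycle. -/
theorem stmt13 :
    ¬ ∃ f : ZMod 12 → StarVertex 4, Function.Bijective f ∧
      ∀ k : ZMod 12, starArc (f k) (f (k + 1)) := by
  rintro ⟨f, hbij, harc⟩
  choose i hi2 hif using harc
  set s : ℕ → Bool := fun n => decide ((i (n : ZMod 12)).val = 3) with hs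
  have hg : ∀ n : ℕ, gcyc (i (n : ZMod 12)) = gb (s n) := by
    intro n
    have h2 := hi2 (n : ZMod 12)
    have h4 := (i (n : ZMod 12)).isLt
    by_cases h3 : (i (n : ZMod 12)).val = 3
    · have hi3 : i (n : ZMod 12) = 3 := Fin.ext (by rw [h3]; rfl)
      have hsn : s n = true := by simp [hs, h3]
      rw [hi3, hsn]; rfl
    · have hv2 : (i (n : ZMod 12)).val = 2 := by omega
      have hi2' : i (n : ZMod 12) = 2 := Fin.ext (by rw [hv2]; rfl)
      have hsn : s n = false := by simp [hs, h3]
      rw [hi2', hsn]; rfl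
  have hP : ∀ n : ℕ, ((f (n : ZMod 12)) : Equiv.Perm (Fin 4))
      = (f 0 : Equiv.Perm (Fin 4)) * Ppath s n := by
    intro n
    induction n with
    | zero => simp [Ppath]
    | succ n ihn =>
        have hc : ((n + 1 : ℕ) : ZMod 12) = (n : ZMod 12) + 1 := by push_cast; ring
        rw [hc, hif (n : ZMod 12), ihn, hg n]
        rw [mul_assoc]
        rfl
  have h12 : Ppath s 12 = 1 := by
    have h0 : ((12 : ℕ) : ZMod 12) = 0 := by decide
    have h1 := hP 12
    rw [h0] at h1
    have hme : (f 0 : Equiv.Perm (Fin 4)) * 1 = (f 0 : Equiv.Perm (Fin 4)) * Ppath s 12 := by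
      rw [mul_one]; exact h1
    exact (mul_left_cancel hme).symm
  have hinj : ∀ j k : ℕ, j < 12 → k < 12 → Ppath s j = Ppath s k → j = k := by
    intro j k hj hk he
    have : ((f (j : ZMod 12)) : Equiv.Perm (Fin 4)) = ((f (k : ZMod 12)) : Equiv.Perm (Fin 4)) := by
      rw [hP j, hP k, he]
    have hfe : f (j : ZMod 12) = f (k : ZMod 12) := Subtype.ext this
    have hz : (j : ZMod 12) = (k : ZMod 12) := hbij.injective hfe
    have := congrArg ZMod.val hz
    rwa [ZMod.val_cast_of_lt hj, ZMod.val_cast_of_lt hk] at this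
  have := grow_step s 12 0 rfl hinj h12
  simp only [List.range_zero, List.reverse_nil, List.map_nil] at this
  have h1 : Ppath s 0 = 1 := rfl
  rw [h1] at this
  rw [grow_false] at this
  exact Bool.false_ne_true this
end

section
/- For every integer n ≥ 3, the binary-star digraph BST⃗_n is isomorphic to the canonical bipartite double cover of the star digraph ST⃗_n, i.e. to the digraph on vertex set Alt_n × {0,1} having an arc from (σ, ε) to (τ, 1−ε) precisely when (σ, τ) is an arc of ST⃗_n. -/
/-- The arc relation of the binary-star digraph `BST⃗_m` on the symmetric group: an arc
from `σ` to `σ ∘ (1 i)` for each even `σ` and each `i ∈ {2, …, m-1}`, and an arc from `σ`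
to `σ ∘ (0 i)` for each odd `σ` and each `i ∈ {2, …, m-1}`. -/
def bstArc {m : ℕ} [NeZero m] (σ τ : Equiv.Perm (Fin m)) : Prop :=
  (σ ∈ alternatingGroup (Fin m) ∧ ∃ i : Fin m, 2 ≤ i.val ∧ τ = σ * Equiv.swap 1 i) ∨
  (σ ∉ alternatingGroup (Fin m) ∧ ∃ i : Fin m, 2 ≤ i.val ∧ τ = σ * Equiv.swap 0 i)

section Aux
variable (n : ℕ)

instance altDec : DecidablePred (· ∈ alternatingGroup (Fin (n+3))) := fun σ =>
  decidable_of_iff _ (Equiv.Perm.mem_alternatingGroup (f := σ)).symm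

lemma fin_zero_ne_one : (0 : Fin (n+3)) ≠ 1 := by
  simp [Fin.ext_iff]

lemma sign_swap01 : Equiv.Perm.sign (Equiv.swap (0 : Fin (n+3)) 1) = -1 :=
  Equiv.Perm.sign_swap (fin_zero_ne_one n)

lemma mem_mul_swap01 {σ : Equiv.Perm (Fin (n+3))} (h : σ ∉ alternatingGroup (Fin (n+3))) :
    σ * Equiv.swap 0 1 ∈ alternatingGroup (Fin (n+3)) := by
  have := Int.units_eq_one_or (Equiv.Perm.sign σ)
  simp only [Equiv.Perm.mem_alternatingGroup] at h ⊢
  rw [map_mul, sign_swap01]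
  rcases this with h1 | h1
  · exact absurd h1 h
  · rw [h1]; decide

lemma not_mem_mul_swap01 {σ : Equiv.Perm (Fin (n+3))} (h : σ ∈ alternatingGroup (Fin (n+3))) :
    σ * Equiv.swap 0 1 ∉ alternatingGroup (Fin (n+3)) := by
  simp only [Equiv.Perm.mem_alternatingGroup] at h ⊢
  rw [map_mul, sign_swap01, h]
  decide

lemma swap_conj {i : Fin (n+3)} (hi : 2 ≤ i.val) :
    Equiv.swap 0 1 * Equiv.swap 1 i * Equiv.swap 0 1 = Equiv.swap (0 : Fin (n+3)) i := by
  have h1 : i ≠ 1 := by intro h; rw [h] at hi; norm_num [Fin.val_one] at hi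
  have h0 : i ≠ 0 := by intro h; rw [h] at hi; norm_num at hi
  have := Equiv.swap_mul_swap_mul_swap (x := i) (y := (1 : Fin (n+3))) (z := 0) h1 h0
  rwa [Equiv.swap_comm 1 0, Equiv.swap_comm i 1] at this

def theEquiv : Equiv.Perm (Fin (n+3)) ≃ StarVertex (n+3) × ZMod 2 where
  toFun σ :=
    if h : σ ∈ alternatingGroup (Fin (n+3)) then (⟨σ, h⟩, 0)
    else (⟨σ * Equiv.swap 0 1, mem_mul_swap01 n h⟩, 1)
  invFun p := if p.2 = 0 then (p.1 : Equiv.Perm (Fin (n+3))) else (p.1 : Equiv.Perm (Fin (n+3))) * Equiv.swap 0 1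
  left_inv σ := by
    by_cases h : σ ∈ alternatingGroup (Fin (n+3))
    · simp [h]
    · simp [h, mul_assoc]
  right_inv p := by
    obtain ⟨⟨σ, hσ⟩, ε⟩ := p
    obtain rfl | rfl : ε = 0 ∨ ε = 1 := by revert ε; decide
    · simp [hσ]
    · have h1 : (1 : ZMod 2) ≠ 0 := by decide
      have h2 := not_mem_mul_swap01 n hσ
      simp [h1, h2, mul_assoc]

/-- For every `n ≥ 3` (here written `n + 3`), the binary-star digraph `BST⃗_n` is
isomorphic to the canonical bipartite double cover of `ST⃗_n`, i.e. to the digraph on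
`Alt_n × {0,1}` with an arc from `(σ, ε)` to `(τ, 1 - ε)` exactly when `(σ, τ)` is an arc
of `ST⃗_n`. -/
theorem stmt15 (n : ℕ) :
    ∃ f : Equiv.Perm (Fin (n + 3)) ≃ StarVertex (n + 3) × ZMod 2,
      ∀ σ τ : Equiv.Perm (Fin (n + 3)),
        bstArc σ τ ↔ (starArc (f σ).1 (f τ).1 ∧ (f τ).2 = 1 - (f σ).2) := by
  refine ⟨theEquiv n, fun σ τ => ?_⟩
  by_cases hσ : σ ∈ alternatingGroup (Fin (n+3))
  · constructor
    · rintro (⟨-, i, hi, rfl⟩ | ⟨h, -⟩)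
      · have h1 : i ≠ 1 := by intro h; rw [h] at hi; norm_num [Fin.val_one] at hi
        have hτ : σ * Equiv.swap 1 i ∉ alternatingGroup (Fin (n+3)) := by
          simp only [Equiv.Perm.mem_alternatingGroup] at hσ ⊢
          rw [map_mul, Equiv.Perm.sign_swap (Ne.symm h1), hσ]
          decide
        simp only [theEquiv, Equiv.coe_fn_mk, dif_pos hσ, dif_neg hτ]
        refine ⟨⟨i, hi, ?_⟩, by decide⟩
        rw [gcyc, ← mul_assoc]
      · exact absurd hσ h
    · rintro ⟨⟨i, hi, heq⟩, hpar⟩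
      left
      refine ⟨hσ, i, hi, ?_⟩
      simp only [theEquiv, Equiv.coe_fn_mk, dif_pos hσ] at heq hpar
      by_cases hτ : τ ∈ alternatingGroup (Fin (n+3))
      · rw [dif_pos hτ] at hpar
        simp at hpar
      · simp only [dif_neg hτ] at heq
        have h2 : τ = σ * gcyc i * Equiv.swap 0 1 := by
          have := congrArg (· * Equiv.swap 0 1) heq
          simpa [mul_assoc] using this
        rw [h2, gcyc]
        simp [mul_assoc]
  · constructor
    · rintro (⟨h, -⟩ | ⟨-, i, hi, rfl⟩)
      · exact absurd h hσ
      · have h0 : i ≠ 0 := by intro h; rw [h] at hi; norm_num at hi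
        have hτ : σ * Equiv.swap 0 i ∈ alternatingGroup (Fin (n+3)) := by
          have := Int.units_eq_one_or (Equiv.Perm.sign σ)
          simp only [Equiv.Perm.mem_alternatingGroup] at hσ ⊢
          rw [map_mul, Equiv.Perm.sign_swap (Ne.symm h0)]
          rcases this with h1 | h1
          · exact absurd h1 hσ
          · rw [h1]; decide
        simp only [theEquiv, Equiv.coe_fn_mk, dif_neg hσ, dif_pos hτ]
        refine ⟨⟨i, hi, ?_⟩, by decide⟩
        rw [gcyc, show σ * Equiv.swap 0 1 * (Equiv.swap 1 i * Equiv.swap 0 1)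
              = σ * (Equiv.swap 0 1 * Equiv.swap 1 i * Equiv.swap 0 1) by group,
            swap_conj n hi]
    · rintro ⟨⟨i, hi, heq⟩, hpar⟩
      right
      refine ⟨hσ, i, hi, ?_⟩
      simp only [theEquiv, Equiv.coe_fn_mk, dif_neg hσ] at heq hpar
      by_cases hτ : τ ∈ alternatingGroup (Fin (n+3))
      · simp only [dif_pos hτ] at heq
        rw [heq, gcyc, show σ * Equiv.swap 0 1 * (Equiv.swap 1 i * Equiv.swap 0 1)
              = σ * (Equiv.swap 0 1 * Equiv.swap 1 i * Equiv.swap 0 1) by group,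
            swap_conj n hi]
      · rw [dif_neg hτ] at hpar
        simp at hpar
end Aux
end
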